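/- Let k ≥ 0 and let L be the lattice ℤ³ with Gram matrix [[2,0,0],[0,2,1],[0,1,2k+1]], basis λ₁, λ₂, τ, and set d = 2+8k. Then the dual classes λ₁/2 and (λ₂ − 2τ)/(d/2) generate the discriminant group L∨/L, and L∨/L ≅ ℤ/2 × ℤ/(d/2). -/

import Mathlib

/-- For the lattice [[2,0,0],[0,2,1],[0,1,2k+1]] of discriminant d = 2+8k, the
classes of λ₁/2 and (λ₂-2τ)/(d/2) generate the discriminant group L∨/L, and
L∨/L ≅ ℤ/2 × ℤ/(d/2). -/
theorem stmt_13 (k : ℤ) (kq : ℚ) (hq : kq = (k : ℚ)) (hk : 0 ≤ k) :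
    let G : Matrix (Fin 3) (Fin 3) ℚ := !![2,0,0;0,2,1;0,1,2*kq+1]
    let dual : Set (Fin 3 → ℚ) :=
      {x | ∀ y : Fin 3 → ℤ, ∃ n : ℤ, dotProduct x (G.mulVec (fun i => (y i : ℚ))) = n}
    let v₁ : Fin 3 → ℚ := ![1/2, 0, 0]
    let v₂ : Fin 3 → ℚ := ![0, 1/(4*kq+1), -2/(4*kq+1)]
    v₁ ∈ dual ∧ v₂ ∈ dual ∧
    (∀ x ∈ dual, ∃ a b : ℤ, ∃ z : Fin 3 → ℤ,
        x = a • v₁ + b • v₂ + fun i => (z i : ℚ)) ∧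
    (∀ a b : ℤ,
        (∃ z : Fin 3 → ℤ, a • v₁ + b • v₂ = fun i => (z i : ℚ)) ↔
          (2 ∣ a ∧ (4*k+1) ∣ b)) := by
  intro G dual v₁ v₂
  have hk' : (0:ℚ) ≤ kq := by rw [hq]; exact_mod_cast hk
  have hD : (4*kq+1) ≠ 0 := by positivity
  refine ⟨?_, ?_, ?_, ?_⟩
  · intro y
    refine ⟨y 0, ?_⟩
    simp [G, v₁, dotProduct, Matrix.mulVec, Fin.sum_univ_three,
      Matrix.vecHead, Matrix.vecTail]
  · intro y
    refine ⟨-y 2, ?_⟩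
    simp [G, v₂, dotProduct, Matrix.mulVec, Fin.sum_univ_three,
      Matrix.vecHead, Matrix.vecTail]
    field_simp
    ring
  · intro x hx
    obtain ⟨m, hm⟩ := hx ![1,0,0]
    obtain ⟨p, hp⟩ := hx ![0,1,0]
    obtain ⟨q, hq'⟩ := hx ![0,0,1]
    simp [G, dotProduct, Matrix.mulVec, Fin.sum_univ_three,
      Matrix.vecHead, Matrix.vecTail] at hm hp hq'
    subst hq
    refine ⟨m, (2*k+1)*p - q, ![0, 0, p], ?_⟩
    funext i
    fin_cases i
    · simp [v₁, v₂]; push_cast; field_simp; linarith [hm]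
    · simp [v₁, v₂]; push_cast; field_simp; linear_combination (2*(k:ℚ)+1)*hp - hq'
    · simp [v₁, v₂]; push_cast; field_simp; linear_combination (-1:ℚ)*hp + 2*hq'
  · intro a b
    constructor
    · rintro ⟨z, hz⟩
      have h0 := congrFun hz 0
      have h1 := congrFun hz 1
      simp [v₁, v₂] at h0 h1
      constructor
      · have : (a:ℚ) = 2 * z 0 := by linarith [h0]
        exact ⟨z 0, by exact_mod_cast this⟩
      · have : (b:ℚ) = (4*(k:ℚ)+1) * z 1 := by
          rw [← hq]; field_simp at h1; linarith [h1]
        exact ⟨z 1, by exact_mod_cast this⟩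
    · rintro ⟨⟨a', rfl⟩, ⟨b', rfl⟩⟩
      refine ⟨![a', b', -2*b'], ?_⟩
      funext i
      fin_cases i <;> simp [v₁, v₂, hq] <;> push_cast <;> field_simp <;> ring
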